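/- Let τ1, τ2 : [0,1] → [0,1] be Borel measurable maps. Let p⁽ⁿ⁾, p : [0,1] → [0,1] be Borel measurable with p⁽ⁿ⁾ → p λ_Leb-almost everywhere. For each n, let f⁽ⁿ⁾ be a density invariant under the random map R⁽ⁿ⁾ = {τ1, τ2; p⁽ⁿ⁾, 1−p⁽ⁿ⁾}, and suppose f⁽ⁿ⁾ → f in L¹([0,1], λ_Leb). Then f is a density invariant under R = {τ1, τ2; p, 1−p}. -/

import Mathlib

open MeasureTheory Set Filter
open scoped ENNReal

/-- Lebesgue measure restricted to the unit interval `[0,1]`. -/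
noncomputable def leb01 : Measure ℝ := volume.restrict (Set.Icc (0:ℝ) 1)

/-- The measure `f · λ_Leb` with density `f` with respect to Lebesgue measure on `[0,1]`. -/
noncomputable def densMeasure (f : ℝ → ℝ) : Measure ℝ :=
  leb01.withDensity (fun x => ENNReal.ofReal (f x))

/-- `f` is a probability density on `[0,1]`. -/
def IsDensity (f : ℝ → ℝ) : Prop :=
  Measurable f ∧ (∀ x, 0 ≤ f x) ∧ (∫ x in Set.Icc (0:ℝ) 1, f x = 1)

/-- Invariance of a measure `μ` under the position dependent random map
`R = {τ1, τ2; p, 1-p}`. -/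
def RMInvariant (τ1 τ2 p : ℝ → ℝ) (μ : Measure ℝ) : Prop :=
  ∀ A : Set ℝ, MeasurableSet A →
    μ A = ∫⁻ x, (ENNReal.ofReal (p x) * A.indicator (fun _ => (1:ℝ≥0∞)) (τ1 x)
      + ENNReal.ofReal (1 - p x) * A.indicator (fun _ => (1:ℝ≥0∞)) (τ2 x)) ∂μ

/-- Perturbation bound: if `g ≤ 1`, then `∫ g·a⁺ ≤ ∫ g·b⁺ + ∫ |a−b|`. -/
lemma pert_lintegral (μ : Measure ℝ) (g : ℝ → ℝ≥0∞) (hg : Measurable g) (hg1 : ∀ x, g x ≤ 1)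
    (a b : ℝ → ℝ) (hb : Measurable b) :
    ∫⁻ x, g x * ENNReal.ofReal (a x) ∂μ
      ≤ (∫⁻ x, g x * ENNReal.ofReal (b x) ∂μ) + ∫⁻ x, ENNReal.ofReal |a x - b x| ∂μ := by
  rw [← lintegral_add_left (f := fun x => g x * ENNReal.ofReal (b x)) (hg.mul hb.ennreal_ofReal)]
  refine lintegral_mono fun x => ?_
  have h1 : a x ≤ b x + |a x - b x| := by
    have := le_abs_self (a x - b x); linarith
  calc g x * ENNReal.ofReal (a x)
      ≤ g x * (ENNReal.ofReal (b x) + ENNReal.ofReal |a x - b x|) := by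
        refine mul_le_mul_right ?_ _
        exact le_trans (ENNReal.ofReal_le_ofReal h1) (ENNReal.ofReal_add_le)
    _ = g x * ENNReal.ofReal (b x) + g x * ENNReal.ofReal |a x - b x| := mul_add _ _ _
    _ ≤ g x * ENNReal.ofReal (b x) + ENNReal.ofReal |a x - b x| := by
        refine add_le_add_right ?_ _
        calc g x * ENNReal.ofReal |a x - b x| ≤ 1 * ENNReal.ofReal |a x - b x| :=
              mul_le_mul_left (hg1 x) _
          _ = ENNReal.ofReal |a x - b x| := one_mul _

/-- Squeeze lemma in `ℝ≥0∞`. -/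
lemma ennreal_squeeze (a b ε : ℕ → ℝ≥0∞) (L : ℝ≥0∞) (hL : L ≠ ⊤)
    (h1 : ∀ n, a n ≤ b n + ε n) (h2 : ∀ n, b n ≤ a n + ε n)
    (hb : Tendsto b atTop (nhds L)) (hε : Tendsto ε atTop (nhds 0)) :
    Tendsto a atTop (nhds L) := by
  have hhi : Tendsto (fun n => b n + ε n) atTop (nhds L) := by
    simpa using hb.add hε
  have hlo : Tendsto (fun n => b n - ε n) atTop (nhds L) := by
    simpa using ENNReal.Tendsto.sub hb hε (Or.inl hL)
  exact tendsto_of_tendsto_of_tendsto_of_le_of_le hlo hhi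
    (fun n => tsub_le_iff_right.2 (h2 n)) h1

/-- (Continuity theorem, fixed maps.)  If `pₙ → p` a.e., each `fₙ` is a
density invariant under `Rₙ = {τ1, τ2; pₙ, 1−pₙ}` and `fₙ → f` in `L¹`, then `f` is a
density invariant under `R = {τ1, τ2; p, 1−p}`. -/
theorem limit_density_invariant_under_limit_random_map
    (τ1 τ2 : ℝ → ℝ) (hτ1 : Measurable τ1) (hτ2 : Measurable τ2)
    (hτ1m : MapsTo τ1 (Set.Icc (0:ℝ) 1) (Set.Icc (0:ℝ) 1))
    (hτ2m : MapsTo τ2 (Set.Icc (0:ℝ) 1) (Set.Icc (0:ℝ) 1))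
    (p : ℕ → ℝ → ℝ) (plim : ℝ → ℝ)
    (hpm : ∀ n, Measurable (p n)) (hplimm : Measurable plim)
    (hp01 : ∀ n, ∀ x, p n x ∈ Set.Icc (0:ℝ) 1) (hplim01 : ∀ x, plim x ∈ Set.Icc (0:ℝ) 1)
    (hae : ∀ᵐ x ∂leb01, Filter.Tendsto (fun n => p n x) Filter.atTop (nhds (plim x)))
    (f : ℕ → ℝ → ℝ) (flim : ℝ → ℝ)
    (hfd : ∀ n, IsDensity (f n))
    (hfinv : ∀ n, RMInvariant τ1 τ2 (p n) (densMeasure (f n)))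
    (hflimm : Measurable flim)
    (hL1 : Filter.Tendsto (fun n => eLpNorm (fun x => f n x - flim x) 1 leb01)
      Filter.atTop (nhds 0)) :
    (∀ᵐ x ∂leb01, 0 ≤ flim x) ∧ (∫ x in Set.Icc (0:ℝ) 1, flim x = 1) ∧
    RMInvariant τ1 τ2 plim (densMeasure flim) := by
  -- the L¹ error
  set ε : ℕ → ℝ≥0∞ := fun n => ∫⁻ x, ENNReal.ofReal |f n x - flim x| ∂leb01 with hεdef
  have hεeq : ∀ n, eLpNorm (fun x => f n x - flim x) 1 leb01 = ε n := by
    intro n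
    rw [eLpNorm_one_eq_lintegral_enorm]
    exact lintegral_congr fun x => Real.enorm_eq_ofReal_abs _
  have hε : Tendsto ε atTop (nhds 0) := by
    have := hL1; simp only [hεeq] at this; exact this
  -- integrability of f n
  have hint : ∀ n, Integrable (f n) leb01 := by
    intro n
    by_contra h
    have h0 : (∫ x, f n x ∂leb01) = 0 := integral_undef h
    have h1 : (∫ x, f n x ∂leb01) = 1 := (hfd n).2.2
    rw [h0] at h1; exact zero_ne_one h1
  have hlint : ∀ n, ∫⁻ x, ENNReal.ofReal (f n x) ∂leb01 = 1 := by
    intro n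
    rw [← ofReal_integral_eq_lintegral_ofReal (hint n)
      (Filter.Eventually.of_forall (hfd n).2.1)]
    rw [show (∫ x, f n x ∂leb01) = 1 from (hfd n).2.2]
    exact ENNReal.ofReal_one
  -- (i) nonnegativity a.e.
  have hnegle : ∀ n, (∫⁻ x, ENNReal.ofReal (-(flim x)) ∂leb01) ≤ ε n := by
    intro n
    refine lintegral_mono fun x => ENNReal.ofReal_le_ofReal ?_
    have h1 : 0 ≤ f n x := (hfd n).2.1 x
    have h2 : f n x - flim x ≤ |f n x - flim x| := le_abs_self _
    linarith
  have hneg0 : (∫⁻ x, ENNReal.ofReal (-(flim x)) ∂leb01) = 0 :=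
    le_antisymm (ge_of_tendsto' hε hnegle) (by simp)
  have hnonneg : ∀ᵐ x ∂leb01, 0 ≤ flim x := by
    have := (lintegral_eq_zero_iff (ENNReal.measurable_ofReal.comp hflimm.neg)).1 hneg0
    filter_upwards [this] with x hx
    have : ENNReal.ofReal (-(flim x)) = 0 := hx
    have := ENNReal.ofReal_eq_zero.1 this
    linarith
  -- finiteness of ∫⁻ flim⁺
  have hIlim : (∫⁻ x, ENNReal.ofReal (flim x) ∂leb01) ≠ ⊤ := by
    obtain ⟨n, hn⟩ : ∃ n, ε n < 1 :=
      (hε.eventually_lt_const zero_lt_one).exists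
    have hb := pert_lintegral leb01 (fun _ => 1) measurable_const (fun _ => le_rfl)
      flim (f n) (hfd n).1
    simp only [one_mul] at hb
    have habs : (∫⁻ x, ENNReal.ofReal |flim x - f n x| ∂leb01) = ε n :=
      lintegral_congr fun x => by rw [abs_sub_comm]
    rw [hlint n, habs] at hb
    exact ne_top_of_le_ne_top (ENNReal.add_ne_top.2 ⟨ENNReal.one_ne_top, ne_top_of_lt hn⟩) hb
  -- (ii) integral of flim is 1
  have hflimint : Integrable flim leb01 := by
    refine ⟨hflimm.aestronglyMeasurable, ?_⟩
    rw [hasFiniteIntegral_iff_norm]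
    have : (∫⁻ x, ENNReal.ofReal ‖flim x‖ ∂leb01) = ∫⁻ x, ENNReal.ofReal (flim x) ∂leb01 := by
      refine lintegral_congr_ae ?_
      filter_upwards [hnonneg] with x hx
      rw [Real.norm_eq_abs, abs_of_nonneg hx]
    rw [this]; exact lt_top_iff_ne_top.2 hIlim
  have hintlim : (∫ x, flim x ∂leb01) = 1 := by
    have htend : Tendsto (fun n => ∫ x, f n x ∂leb01) atTop (nhds (∫ x, flim x ∂leb01)) := by
      refine tendsto_integral_of_L1 flim hflimint.1
        (Filter.Eventually.of_forall hint) ?_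
      have : (fun n => ∫⁻ x, ‖f n x - flim x‖ₑ ∂leb01) = ε := by
        funext n; exact lintegral_congr fun x => Real.enorm_eq_ofReal_abs _
      rw [this]; exact hε
    have hconst : Tendsto (fun _ : ℕ => (1:ℝ)) atTop (nhds (1:ℝ)) := tendsto_const_nhds
    have : (fun n => ∫ x, f n x ∂leb01) = fun _ : ℕ => (1:ℝ) := by
      funext n; exact (hfd n).2.2
    rw [this] at htend
    exact tendsto_nhds_unique htend hconst
  refine ⟨hnonneg, hintlim, ?_⟩
  -- (iii) invariance
  intro A hA
  set gA : ℝ → ℝ≥0∞ := A.indicator (fun _ => (1:ℝ≥0∞)) with hgAdef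
  have hgAm : Measurable gA := measurable_const.indicator hA
  have hgA1 : ∀ x, gA x ≤ 1 := by
    intro x; by_cases hx : x ∈ A <;> simp [hgAdef, Set.indicator, hx]
  -- the weight functions
  set G : ℕ → ℝ → ℝ≥0∞ := fun n x =>
    ENNReal.ofReal (p n x) * gA (τ1 x) + ENNReal.ofReal (1 - p n x) * gA (τ2 x) with hGdef
  set Glim : ℝ → ℝ≥0∞ := fun x =>
    ENNReal.ofReal (plim x) * gA (τ1 x) + ENNReal.ofReal (1 - plim x) * gA (τ2 x) with hGlimdef
  have hGm : ∀ n, Measurable (G n) :=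
    fun n => ((ENNReal.measurable_ofReal.comp (hpm n)).mul (hgAm.comp hτ1)).add
      ((ENNReal.measurable_ofReal.comp ((hpm n).const_sub 1)).mul (hgAm.comp hτ2))
  have hGlimm : Measurable Glim :=
    ((ENNReal.measurable_ofReal.comp hplimm).mul (hgAm.comp hτ1)).add
      ((ENNReal.measurable_ofReal.comp (hplimm.const_sub 1)).mul (hgAm.comp hτ2))
  have hbound : ∀ (q : ℝ → ℝ), (∀ x, q x ∈ Set.Icc (0:ℝ) 1) → ∀ x,
      ENNReal.ofReal (q x) * gA (τ1 x) + ENNReal.ofReal (1 - q x) * gA (τ2 x) ≤ 1 := by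
    intro q hq x
    have h1 : ENNReal.ofReal (q x) * gA (τ1 x) ≤ ENNReal.ofReal (q x) := by
      calc ENNReal.ofReal (q x) * gA (τ1 x) ≤ ENNReal.ofReal (q x) * 1 :=
            mul_le_mul_right (hgA1 _) _
        _ = _ := mul_one _
    have h2 : ENNReal.ofReal (1 - q x) * gA (τ2 x) ≤ ENNReal.ofReal (1 - q x) := by
      calc ENNReal.ofReal (1 - q x) * gA (τ2 x) ≤ ENNReal.ofReal (1 - q x) * 1 :=
            mul_le_mul_right (hgA1 _) _
        _ = _ := mul_one _
    calc ENNReal.ofReal (q x) * gA (τ1 x) + ENNReal.ofReal (1 - q x) * gA (τ2 x)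
        ≤ ENNReal.ofReal (q x) + ENNReal.ofReal (1 - q x) := add_le_add h1 h2
      _ = ENNReal.ofReal (q x + (1 - q x)) := (ENNReal.ofReal_add (hq x).1 (by linarith [(hq x).2])).symm
      _ = 1 := by norm_num
  have hGb : ∀ n x, G n x ≤ 1 := fun n => hbound (p n) (hp01 n)
  have hGlimb : ∀ x, Glim x ≤ 1 := hbound plim hplim01
  -- identify both sides with lintegrals against leb01
  have hLHS : ∀ (h : ℝ → ℝ), Measurable h →
      densMeasure h A = ∫⁻ x, gA x * ENNReal.ofReal (h x) ∂leb01 := by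
    intro h hm
    rw [densMeasure, withDensity_apply _ hA, ← lintegral_indicator hA]
    refine lintegral_congr fun x => ?_
    by_cases hx : x ∈ A <;> simp [hgAdef, Set.indicator, hx]
  have hRHSn : ∀ n, (∫⁻ x, (ENNReal.ofReal (p n x) * gA (τ1 x)
      + ENNReal.ofReal (1 - p n x) * gA (τ2 x)) ∂(densMeasure (f n)))
      = ∫⁻ x, G n x * ENNReal.ofReal (f n x) ∂leb01 := by
    intro n
    rw [densMeasure, lintegral_withDensity_eq_lintegral_mul leb01
      (hfd n).1.ennreal_ofReal (hGm n)]
    exact lintegral_congr fun x => mul_comm _ _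
  have hRHSlim : (∫⁻ x, (ENNReal.ofReal (plim x) * gA (τ1 x)
      + ENNReal.ofReal (1 - plim x) * gA (τ2 x)) ∂(densMeasure flim))
      = ∫⁻ x, Glim x * ENNReal.ofReal (flim x) ∂leb01 := by
    rw [densMeasure, lintegral_withDensity_eq_lintegral_mul leb01
      hflimm.ennreal_ofReal hGlimm]
    exact lintegral_congr fun x => mul_comm _ _
  -- left side converges
  have habs : ∀ n, (∫⁻ x, ENNReal.ofReal |flim x - f n x| ∂leb01) = ε n :=
    fun n => lintegral_congr fun x => by rw [abs_sub_comm]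
  set L : ℝ≥0∞ := ∫⁻ x, gA x * ENNReal.ofReal (flim x) ∂leb01 with hLdef
  have hLne : L ≠ ⊤ := by
    refine ne_top_of_le_ne_top hIlim (lintegral_mono fun x => ?_)
    calc gA x * ENNReal.ofReal (flim x) ≤ 1 * ENNReal.ofReal (flim x) :=
          mul_le_mul_left (hgA1 x) _
      _ = _ := one_mul _
  have hLtend : Tendsto (fun n => ∫⁻ x, gA x * ENNReal.ofReal (f n x) ∂leb01)
      atTop (nhds L) := by
    refine ennreal_squeeze _ (fun _ => L) ε L hLne ?_ ?_ tendsto_const_nhds hε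
    · intro n; exact pert_lintegral leb01 gA hgAm hgA1 (f n) flim hflimm
    · intro n
      rw [← habs n]
      exact pert_lintegral leb01 gA hgAm hgA1 flim (f n) (hfd n).1
  -- right side converges
  set R : ℝ≥0∞ := ∫⁻ x, Glim x * ENNReal.ofReal (flim x) ∂leb01 with hRdef
  have hRne : R ≠ ⊤ := by
    refine ne_top_of_le_ne_top hIlim (lintegral_mono fun x => ?_)
    calc Glim x * ENNReal.ofReal (flim x) ≤ 1 * ENNReal.ofReal (flim x) :=
          mul_le_mul_left (hGlimb x) _
      _ = _ := one_mul _
  have hmid : Tendsto (fun n => ∫⁻ x, G n x * ENNReal.ofReal (flim x) ∂leb01)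
      atTop (nhds R) := by
    refine tendsto_lintegral_of_dominated_convergence
      (fun x => ENNReal.ofReal (flim x))
      (fun n => (hGm n).mul (ENNReal.measurable_ofReal.comp hflimm)) ?_ hIlim ?_
    · intro n
      refine Filter.Eventually.of_forall fun x => ?_
      calc G n x * ENNReal.ofReal (flim x) ≤ 1 * ENNReal.ofReal (flim x) :=
            mul_le_mul_left (hGb n x) _
        _ = _ := one_mul _
    · filter_upwards [hae] with x hx
      have h1 : Tendsto (fun n => ENNReal.ofReal (p n x)) atTop
          (nhds (ENNReal.ofReal (plim x))) :=
        (ENNReal.continuous_ofReal.tendsto _).comp hx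
      have h2 : Tendsto (fun n => ENNReal.ofReal (1 - p n x)) atTop
          (nhds (ENNReal.ofReal (1 - plim x))) :=
        (ENNReal.continuous_ofReal.tendsto _).comp (tendsto_const_nhds.sub hx)
      have hm1 : Tendsto (fun n => ENNReal.ofReal (p n x) * gA (τ1 x)) atTop
          (nhds (ENNReal.ofReal (plim x) * gA (τ1 x))) :=
        ENNReal.Tendsto.mul_const h1 (Or.inr (ne_top_of_le_ne_top ENNReal.one_ne_top (hgA1 _)))
      have hm2 : Tendsto (fun n => ENNReal.ofReal (1 - p n x) * gA (τ2 x)) atTop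
          (nhds (ENNReal.ofReal (1 - plim x) * gA (τ2 x))) :=
        ENNReal.Tendsto.mul_const h2 (Or.inr (ne_top_of_le_ne_top ENNReal.one_ne_top (hgA1 _)))
      simp only [hGdef, hGlimdef]
      exact ENNReal.Tendsto.mul_const (hm1.add hm2) (Or.inr ENNReal.ofReal_ne_top)
  have hRtend : Tendsto (fun n => ∫⁻ x, G n x * ENNReal.ofReal (f n x) ∂leb01)
      atTop (nhds R) :=
    ennreal_squeeze _ (fun n => ∫⁻ x, G n x * ENNReal.ofReal (flim x) ∂leb01) ε R hRne
      (fun n => pert_lintegral leb01 (G n) (hGm n) (hGb n) (f n) flim hflimm)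
      (fun n => by rw [← habs n]; exact pert_lintegral leb01 (G n) (hGm n) (hGb n) flim (f n) (hfd n).1)
      hmid hε
  have heq : ∀ n, (∫⁻ x, gA x * ENNReal.ofReal (f n x) ∂leb01)
      = ∫⁻ x, G n x * ENNReal.ofReal (f n x) ∂leb01 := by
    intro n
    rw [← hLHS (f n) (hfd n).1, ← hRHSn n]
    exact hfinv n A hA
  have hLR : L = R := tendsto_nhds_unique (hLtend.congr heq) hRtend
  rw [hLHS flim hflimm, hRHSlim]
  exact hLR
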